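/- Suppose T is a finite collection of sets of equal measure v > 0 with Δ_max(T) = D ≥ 1, and suppose T' ⊆ T is a subcollection such that for every measurable K, |T'[K]| ≤ (C/D)·|T[K]| + C for some constant C ≥ 1 (a typical property of a random subset of density 1/D). Then Δ_max(T') ≤ C·(1 + D·v/m) where m is the minimum measure of candidate sets K with T'[K] nonempty. -/

import Mathlib

open MeasureTheory Finset
open scoped ENNReal Classical

/-- Random sparsification: if every set of `T` has measure `v`, `Δ_max(T) ≤ D`, and the
subfamily `T'` satisfies `|T'[K]| ≤ (C/D)|T[K]| + C` for every `K`, then for every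
candidate `K` of measure at least `m` one has `Δ(T', K) ≤ C·(1 + D·v/m)`. -/
theorem random_subfamily_katz_tao {Ω ι : Type*} [MeasurableSpace Ω] (μ : Measure Ω)
    (Tset : ι → Set Ω) (T T' : Finset ι) (hsub : T' ⊆ T)
    (v D C m : ℝ≥0∞)
    (hv : 0 < v) (hvfin : v < ⊤)
    (hvol : ∀ i ∈ T, μ (Tset i) = v)
    (hD1 : 1 ≤ D) (hDfin : D < ⊤) (hC : 1 ≤ C) (hm : 0 < m)
    (hDmax : ∀ K : Set Ω, 0 < μ K → μ K < ⊤ →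
      v * ((T.filter fun i => Tset i ⊆ K).card : ℝ≥0∞) / μ K ≤ D)
    (hrand : ∀ K : Set Ω,
      ((T'.filter fun i => Tset i ⊆ K).card : ℝ≥0∞) ≤
        (C / D) * ((T.filter fun i => Tset i ⊆ K).card : ℝ≥0∞) + C) :
    ∀ K : Set Ω, m ≤ μ K → μ K < ⊤ →
      v * ((T'.filter fun i => Tset i ⊆ K).card : ℝ≥0∞) / μ K ≤ C * (1 + D * v / m) := by
  intro K hmK hKfin
  have hK0 : 0 < μ K := lt_of_lt_of_le hm hmK
  have hDmax' := hDmax K hK0 hKfin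
  have hD0 : D ≠ 0 := by positivity
  set x : ℝ≥0∞ := ((T.filter fun i => Tset i ⊆ K).card : ℝ≥0∞)
  set y : ℝ≥0∞ := ((T'.filter fun i => Tset i ⊆ K).card : ℝ≥0∞)
  calc v * y / μ K ≤ v * ((C / D) * x + C) / μ K := by
        gcongr
        exact hrand K
    _ = (C / D) * (v * x / μ K) + C * v / μ K := by
        simp only [div_eq_mul_inv]; ring
    _ ≤ (C / D) * D + C * v / m := by
        gcongr
    _ = C + C * v / m := by
        rw [ENNReal.div_mul_cancel hD0 hDfin.ne]
    _ ≤ C * (1 + D * v / m) := by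
        rw [mul_add, mul_one, mul_div_assoc, mul_div_assoc]
        gcongr
        exact le_mul_of_one_le_left (zero_le ..) hD1
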